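/- arXiv:1304.4397 — 4 statements merged into one kernel-verified Lean document; each statement's English description precedes it below -/
import Mathlib

section
/- For each α ∈ ℕ^{<ω}, the sequence (x_{(α,j)})_{j∈ℕ} converges weakly in c to x_α. -/
open Filter Topology

noncomputable section

/-- The ambient space: bounded real sequences indexed by the positive integers,
with the sup norm.  The space `c` of convergent sequences sits inside it. -/
abbrev cSp : Type := lp (fun _ : ℕ+ => ℝ) ⊤

/-- A "good encoding" `φ : ℕ^{<ω} → ℕ` : a bijection from finite sequences of positive
integers to positive integers sending the empty sequence to `1`, monotone for the prefix
order, and strictly increasing in the last coordinate. -/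
def GoodEnc (e : List ℕ+ ≃ ℕ+) : Prop :=
  e [] = 1 ∧ (∀ α β : List ℕ+, α <+: β → e α ≤ e β) ∧
    ∀ α : List ℕ+, StrictMono fun j : ℕ+ => e (α ++ [j])

/-- The element `x_α ∈ c`: coordinate `i` equals `1` if `φ⁻¹(i)` is a prefix of `α`
and `-1` otherwise. -/
def xel (e : List ℕ+ ≃ ℕ+) (α : List ℕ+) : cSp :=
  ⟨fun i => if e.symm i <+: α then (1 : ℝ) else -1, by
    apply memℓp_infty
    refine ⟨1, ?_⟩
    rintro r ⟨i, rfl⟩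
    by_cases h : e.symm i <+: α <;> simp [h]⟩

/-- `A = {x_α : α ∈ ℕ^{<ω}}`. -/
def Aset (e : List ℕ+ ≃ ℕ+) : Set cSp := Set.range (xel e)

/-- `K` = closed convex hull of `A ∪ (−A)`. -/
def Kset (e : List ℕ+ ≃ ℕ+) : Set cSp := closure (convexHull ℝ (Aset e ∪ -Aset e))

/-- `U` is open for the weak topology of `X`. -/
def WOpen {X : Type*} [NormedAddCommGroup X] [NormedSpace ℝ X] (U : Set X) : Prop :=
  IsOpen (X := WeakSpace ℝ X) U

/- ### Auxiliary material -/

instance : NoMaxOrder ℕ+ := ⟨fun a => ⟨a + 1, by rw [← PNat.coe_lt_coe]; simp⟩⟩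

/-- The unit vector at coordinate `n`. -/
def unitv (n : ℕ+) : cSp := lp.single ⊤ n (1 : ℝ)

lemma prefix_concat_iff' {β α : List ℕ+} {j : ℕ+} :
    β <+: α ++ [j] ↔ β <+: α ∨ β = α ++ [j] := by
  constructor
  · rintro ⟨t, ht⟩
    rcases t.eq_nil_or_concat with rfl | ⟨t', x, rfl⟩
    · right; simpa using ht
    · left
      refine ⟨t', ?_⟩
      have := congrArg List.dropLast ht
      simpa [← List.concat_eq_append, List.concat_eq_append, ← List.append_assoc] using this
  · rintro (⟨t, rfl⟩ | rfl)
    · exact ⟨t ++ [j], by simp⟩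
    · exact List.prefix_refl _

/-- Any continuous functional on `ℓ∞` has absolutely summable values on unit vectors. -/
lemma summable_unitv (f : StrongDual ℝ cSp) :
    Summable fun n : ℕ+ => |f (unitv n)| := by
  apply summable_of_sum_le (fun n => abs_nonneg _) (c := ‖f‖)
  intro s
  classical
  set σ : ℕ+ → ℝ := fun n => if f (unitv n) < 0 then (-1 : ℝ) else 1 with hσ
  set x : cSp := ∑ n ∈ s, σ n • unitv n with hx
  have hxi : ∀ i : ℕ+, x i = if i ∈ s then σ i else 0 := by
    intro i
    have : x i = ∑ n ∈ s, (σ n • unitv n) i := by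
      rw [hx]
      rw [lp.coeFn_sum, Finset.sum_apply]
    rw [this]
    by_cases hi : i ∈ s
    · rw [Finset.sum_eq_single i]
      · simp [unitv, lp.single_apply_self, hi]
      · intro b _ hb
        simp [unitv, lp.single_apply_ne ⊤ b _ hb.symm, Pi.single_apply, hb.symm]
      · intro h; exact absurd hi h
    · rw [if_neg hi, Finset.sum_eq_zero]
      intro b hb
      have : i ≠ b := fun h => hi (h ▸ hb)
      simp [unitv, lp.single_apply_ne ⊤ b _ this, Pi.single_apply, this]
  have hnorm : ‖x‖ ≤ 1 := by
    apply lp.norm_le_of_forall_le zero_le_one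
    intro i
    rw [hxi i]
    by_cases hi : i ∈ s <;> by_cases h0 : f (unitv i) < 0 <;> simp [hσ, hi, h0]
  have hfx : f x = ∑ n ∈ s, σ n * f (unitv n) := by
    rw [hx, map_sum]
    simp [smul_eq_mul]
  have : ∑ n ∈ s, |f (unitv n)| = f x := by
    rw [hfx]
    refine Finset.sum_congr rfl fun n _ => ?_
    by_cases h0 : f (unitv n) < 0
    · simp [hσ, h0, abs_of_neg h0]
    · simp [hσ, h0, abs_of_nonneg (not_lt.mp h0)]
  rw [this]
  calc f x ≤ ‖f x‖ := le_abs_self _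
    _ ≤ ‖f‖ * ‖x‖ := f.le_opNorm x
    _ ≤ ‖f‖ * 1 := by gcongr
    _ = ‖f‖ := mul_one _

lemma xel_concat (e : List ℕ+ ≃ ℕ+) (α : List ℕ+) (j : ℕ+) :
    xel e (α ++ [j]) = xel e α + (2 : ℝ) • unitv (e (α ++ [j])) := by
  apply lp.ext
  funext i
  rw [lp.coeFn_add, lp.coeFn_smul, Pi.add_apply, Pi.smul_apply, smul_eq_mul]
  show (if e.symm i <+: α ++ [j] then (1:ℝ) else -1)
      = (if e.symm i <+: α then (1:ℝ) else -1) + 2 * (unitv (e (α ++ [j])) i)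
  by_cases hi : i = e (α ++ [j])
  · subst hi
    have hsymm : e.symm (e (α ++ [j])) = α ++ [j] := e.symm_apply_apply _
    have hnp : ¬ (α ++ [j] <+: α) := by
      intro h
      have := h.length_le
      simp at this
    rw [hsymm]
    simp [unitv, lp.single_apply_self, hnp]
    norm_num
  · have hne : e.symm i ≠ α ++ [j] := by
      intro h
      exact hi (by rw [← h, e.apply_symm_apply])
    simp only [prefix_concat_iff']
    simp [hne, unitv, lp.single_apply_ne ⊤ _ _ hi, Pi.single_apply, hi]

/-- for each `α ∈ ℕ^{<ω}` the sequence `(x_{(α,j)})_j` converges weakly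
to `x_α`. -/
theorem xel_extend_tendsto_weakly (e : List ℕ+ ≃ ℕ+) (he : GoodEnc e) (α : List ℕ+) :
    ∀ f : StrongDual ℝ cSp,
      Tendsto (fun j : ℕ+ => f (xel e (α ++ [j]))) atTop (𝓝 (f (xel e α))) := by
  intro f
  have hsum := summable_unitv f
  have hinj : Function.Injective fun j : ℕ+ => e (α ++ [j]) := (he.2.2 α).injective
  have hcof : Tendsto (fun j : ℕ+ => |f (unitv (e (α ++ [j])))|) cofinite (𝓝 0) :=
    (hsum.comp_injective hinj).tendsto_cofinite_zero
  have h0 : Tendsto (fun j : ℕ+ => f (unitv (e (α ++ [j])))) atTop (𝓝 0) := by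
    rw [tendsto_zero_iff_abs_tendsto_zero]
    exact hcof.mono_left atTop_le_cofinite
  have key : ∀ j : ℕ+, f (xel e (α ++ [j])) = f (xel e α) + 2 * f (unitv (e (α ++ [j]))) := by
    intro j
    rw [xel_concat e α j, map_add, map_smul, smul_eq_mul]
  simp only [key]
  have := (tendsto_const_nhds (x := f (xel e α)) (f := atTop (α := ℕ+))).add
    (h0.const_mul 2)
  simpa using this
end
end

section
/- Every slice of the set K = closed convex hull of A ∪ (−A) in c has diameter 2, where A = {x_α : α ∈ ℕ^{<ω}}. -/
open Filter Topology
set_option maxHeartbeats 1000000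
set_option synthInstance.maxHeartbeats 400000

noncomputable section

section Aux

variable (e : List ℕ+ ≃ ℕ+)

lemma xel_apply (α : List ℕ+) (i : ℕ+) :
    (xel e α : ∀ _ : ℕ+, ℝ) i = if e.symm i <+: α then 1 else -1 := rfl

lemma norm_xel_le (α : List ℕ+) : ‖xel e α‖ ≤ 1 := by
  apply lp.norm_le_of_forall_le one_pos.le
  intro i
  rw [xel_apply]
  by_cases h : e.symm i <+: α <;> simp [h]

lemma not_concat_prefix (α : List ℕ+) (j : ℕ+) : ¬ (α ++ [j] <+: α) := by
  intro h
  have := h.length_le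
  simp at this

lemma xel_sub_apply (α : List ℕ+) (j : ℕ+) (i : ℕ+) :
    (xel e (α ++ [j]) : ∀ _ : ℕ+, ℝ) i - (xel e α : ∀ _ : ℕ+, ℝ) i
      = if i = e (α ++ [j]) then 2 else 0 := by
  rw [xel_apply, xel_apply]
  by_cases hi : i = e (α ++ [j])
  · subst hi
    simp only [Equiv.symm_apply_apply, if_pos (List.prefix_refl _),
      if_neg (not_concat_prefix α j), if_pos rfl]
    norm_num
  · have h1 : (e.symm i <+: α ++ [j]) ↔ e.symm i <+: α := by
      rw [List.prefix_concat_iff]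
      constructor
      · rintro (h | h)
        · exact absurd (show i = e (α ++ [j]) by rw [← h, Equiv.apply_symm_apply]) hi
        · exact h
      · exact Or.inr
    rw [if_neg hi]
    by_cases h : e.symm i <+: α <;> simp [h, h1]

lemma inj_ext (α : List ℕ+) : Function.Injective fun j : ℕ+ => e (α ++ [j]) := by
  intro a b hab
  have := e.injective hab
  simpa using this

lemma exists_ext (g : StrongDual ℝ cSp) (α : List ℕ+) {δ : ℝ} (hδ : 0 < δ) :
    ∃ j : ℕ+, g (xel e α) - δ < g (xel e (α ++ [j])) := by
  by_contra hcon
  push_neg at hcon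
  obtain ⟨N, hN⟩ := exists_nat_gt (2 * ‖g‖ / δ)
  have hN' : 2 * ‖g‖ < N * δ := by
    rw [div_lt_iff₀ hδ] at hN; linarith
  set S : Finset ℕ+ := (Finset.range N).image Nat.succPNat with hS
  have hScard : S.card = N := by
    rw [hS, Finset.card_image_of_injective _ Nat.succPNat_injective, Finset.card_range]
  set w : cSp := ∑ j ∈ S, (xel e (α ++ [j]) - xel e α) with hw
  have hwnorm : ‖w‖ ≤ 2 := by
    apply lp.norm_le_of_forall_le (by norm_num)
    intro i
    have hcoe : (w : ∀ _ : ℕ+, ℝ) i = ∑ j ∈ S, ((xel e (α ++ [j]) - xel e α : cSp) : ∀ _ : ℕ+, ℝ) i := by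
      rw [hw, lp.coeFn_sum, Finset.sum_apply]
    rw [hcoe]
    simp only [lp.coeFn_sub, Pi.sub_apply, xel_sub_apply]
    rw [← Finset.sum_image (f := fun m => if i = m then (2:ℝ) else 0)
      (g := fun j : ℕ+ => e (α ++ [j])) (fun a _ b _ h => inj_ext e α h)]
    rw [Finset.sum_ite_eq]
    by_cases h : i ∈ S.image fun j : ℕ+ => e (α ++ [j]) <;> simp [h]
  have hgw : g w = ∑ j ∈ S, (g (xel e (α ++ [j])) - g (xel e α)) := by
    rw [hw, map_sum]
    exact Finset.sum_congr rfl fun j _ => by rw [map_sub]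
  have hle : g w ≤ -(N * δ) := by
    rw [hgw]
    calc ∑ j ∈ S, (g (xel e (α ++ [j])) - g (xel e α))
        ≤ ∑ _j ∈ S, (-δ) := Finset.sum_le_sum fun j _ => by
          have := hcon j; linarith
      _ = -(N * δ) := by rw [Finset.sum_const, hScard]; push_cast; ring
  have habs : ‖g w‖ ≤ ‖g‖ * 2 :=
    le_trans (g.le_opNorm w) (by nlinarith [norm_nonneg g])
  have : -(‖g‖ * 2) ≤ g w := neg_le_of_neg_le (le_trans (neg_le_abs _) habs)
  linarith

lemma dist_xel_ext (α : List ℕ+) (j : ℕ+) :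
    2 ≤ dist (xel e α) (xel e (α ++ [j])) := by
  rw [dist_eq_norm]
  have hb := lp.norm_apply_le_norm (E := fun _ : ℕ+ => ℝ) ENNReal.top_ne_zero
    (xel e α - xel e (α ++ [j])) (e (α ++ [j]))
  have hval : ((xel e α - xel e (α ++ [j]) : cSp) : ∀ _ : ℕ+, ℝ) (e (α ++ [j])) = -2 := by
    rw [lp.coeFn_sub, Pi.sub_apply, xel_apply, xel_apply, Equiv.symm_apply_apply,
      if_neg (not_concat_prefix α j), if_pos (List.prefix_refl _)]
    norm_num
  rw [hval] at hb
  simpa using hb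

lemma Aset_sub_ball : Aset e ∪ -Aset e ⊆ Metric.closedBall (0 : cSp) 1 := by
  rintro x hx
  rw [Metric.mem_closedBall, dist_zero_right]
  rcases hx with ⟨α, rfl⟩ | hx
  · exact norm_xel_le e α
  · rw [Set.mem_neg] at hx
    obtain ⟨α, hα⟩ := hx
    have : x = -(xel e α) := by rw [hα, neg_neg]
    rw [this, norm_neg]
    exact norm_xel_le e α

lemma Kset_sub_ball : Kset e ⊆ Metric.closedBall (0 : cSp) 1 :=
  closure_minimal
    (convexHull_min (Aset_sub_ball e) (convex_closedBall 0 1))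
    Metric.isClosed_closedBall

lemma Aset_sub_Kset : Aset e ∪ -Aset e ⊆ Kset e :=
  (subset_convexHull ℝ _).trans subset_closure

end Aux

/-- every slice of `K = closed convex hull of A ∪ (−A)` has diameter `2`
in the sup norm. -/
theorem slice_diam_eq_two (e : List ℕ+ ≃ ℕ+) (he : GoodEnc e)
    (f : StrongDual ℝ cSp) (lam : ℝ) (hlam : 0 < lam)
    (hlam' : lam < sSup (f '' Kset e)) :
    Metric.diam {x ∈ Kset e | sSup (f '' Kset e) - lam < f x} = 2 := by
  set M := sSup (f '' Kset e) with hM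
  set S := {x ∈ Kset e | M - lam < f x} with hSdef
  -- there is a point of K in the slice
  have hKne : (Kset e).Nonempty := ⟨xel e [], Aset_sub_Kset e (Or.inl ⟨[], rfl⟩)⟩
  obtain ⟨r, ⟨x, hxK, rfl⟩, hr⟩ :=
    exists_lt_of_lt_csSup (hKne.image f) (show M - lam < M by linarith)
  -- there is a point of A ∪ -A in the slice
  have hy : ∃ y ∈ Aset e ∪ -Aset e, M - lam < f y := by
    by_contra h
    push_neg at h
    have hconv : Convex ℝ {w : cSp | f w ≤ M - lam} :=
      convex_halfSpace_le (f.toLinearMap.isLinear) _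
    have hclosed : IsClosed {w : cSp | f w ≤ M - lam} :=
      isClosed_le f.continuous continuous_const
    have hsub : Kset e ⊆ {w : cSp | f w ≤ M - lam} :=
      closure_minimal (convexHull_min h hconv) hclosed
    exact absurd (hsub hxK) (not_le.mpr hr)
  obtain ⟨y, hyA, hyf⟩ := hy
  -- produce two points of the slice at distance ≥ 2
  have hpq : ∃ p q : cSp, p ∈ S ∧ q ∈ S ∧ 2 ≤ dist p q := by
    rcases hyA with ⟨α, rfl⟩ | hyA
    · have hδ : (0:ℝ) < f (xel e α) - (M - lam) := by linarith
      obtain ⟨j, hj⟩ := exists_ext e f α hδ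
      refine ⟨xel e α, xel e (α ++ [j]), ⟨Aset_sub_Kset e (Or.inl ⟨α, rfl⟩), hyf⟩,
        ⟨Aset_sub_Kset e (Or.inl ⟨α ++ [j], rfl⟩), by linarith⟩, dist_xel_ext e α j⟩
    · rw [Set.mem_neg] at hyA
      obtain ⟨α, hα⟩ := hyA
      have hy' : y = -(xel e α) := by rw [hα, neg_neg]
      subst hy'
      have hfy : M - lam < (-f) (xel e α) := by simpa using hyf
      have hδ : (0:ℝ) < (-f) (xel e α) - (M - lam) := by linarith
      obtain ⟨j, hj⟩ := exists_ext e (-f) α hδ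
      have hmemA : -(xel e α) ∈ Aset e ∪ -Aset e := Or.inr (by rw [Set.mem_neg]; exact ⟨α, by simp⟩)
      have hmemB : -(xel e (α ++ [j])) ∈ Aset e ∪ -Aset e :=
        Or.inr (by rw [Set.mem_neg]; exact ⟨α ++ [j], by simp⟩)
      refine ⟨-(xel e α), -(xel e (α ++ [j])), ⟨Aset_sub_Kset e hmemA, hyf⟩,
        ⟨Aset_sub_Kset e hmemB, ?_⟩, ?_⟩
      · have : (-f) (xel e (α ++ [j])) = f (-(xel e (α ++ [j]))) := by simp
        rw [← this]; linarith
      · rw [dist_neg_neg]; exact dist_xel_ext e α j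
  obtain ⟨p, q, hp, hq, hdist⟩ := hpq
  -- the slice is inside the closed unit ball
  have hSball : S ⊆ Metric.closedBall (0 : cSp) 1 :=
    fun z hz => Kset_sub_ball e hz.1
  have hb : Bornology.IsBounded S :=
    Metric.isBounded_closedBall.subset hSball
  have hub : Metric.diam S ≤ 2 := by
    apply Metric.diam_le_of_forall_dist_le (by norm_num)
    intro u hu v hv
    have hu1 : dist u 0 ≤ 1 := Metric.mem_closedBall.mp (hSball hu)
    have hv1 : dist v 0 ≤ 1 := Metric.mem_closedBall.mp (hSball hv)
    calc dist u v ≤ dist u 0 + dist 0 v := dist_triangle u 0 v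
      _ = dist u 0 + dist v 0 := by rw [dist_comm 0 v]
      _ ≤ 2 := by linarith
  have hlb : 2 ≤ Metric.diam S := hdist.trans (Metric.dist_le_diam_of_mem hb hp hq)
  linarith
end
end

section
/- There exists a closed, bounded, convex, symmetric subset K of the unit ball of c with diameter 2 such that every slice of K has diameter 2, yet K contains nonempty relatively weakly open subsets of arbitrarily small diameter. -/
set_option synthInstance.maxHeartbeats 400000
set_option maxHeartbeats 1000000


open Filter Topology

noncomputable section

namespace Aux

def enc : List ℕ+ ≃ ℕ+ := (Denumerable.eqv (List ℕ+)).trans (Denumerable.eqv ℕ+).symm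

/-- coordinate functional -/
def coord (m : ℕ+) : cSp →L[ℝ] ℝ :=
  LinearMap.mkContinuous
    { toFun := fun x => x m
      map_add' := fun x y => congrFun (lp.coeFn_add x y) m
      map_smul' := fun c x => congrFun (lp.coeFn_smul c x) m }
    1 (fun x => by
      rw [one_mul]; exact lp.norm_apply_le_norm ENNReal.top_ne_zero x m)

@[simp] lemma coord_apply (m : ℕ+) (x : cSp) : coord m x = x m := rfl

lemma coord_wcont (m : ℕ+) : Continuous fun x : WeakSpace ℝ cSp => coord m x :=
  WeakBilin.eval_continuous _ (coord m)

lemma xel_apply (e : List ℕ+ ≃ ℕ+) (α : List ℕ+) (m : ℕ+) :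
    (xel e α : ℕ+ → ℝ) m = if e.symm m <+: α then 1 else -1 := rfl

lemma xel_apply_enc (α γ : List ℕ+) :
    (xel enc α : ℕ+ → ℝ) (enc γ) = if γ <+: α then 1 else -1 := by
  rw [xel_apply, Equiv.symm_apply_apply]

lemma norm_xel_le (α : List ℕ+) : ‖xel enc α‖ ≤ 1 := by
  apply lp.norm_le_of_forall_le zero_le_one
  intro i
  rw [xel_apply]
  by_cases h : enc.symm i <+: α <;> simp [h]

lemma prefix_snoc_iff {l l' : List ℕ+} {a : ℕ+} :
    l <+: l' ++ [a] ↔ l <+: l' ∨ l = l' ++ [a] := by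
  constructor
  · intro h
    rcases le_or_gt l.length l'.length with hl | hl
    · exact Or.inl (List.prefix_of_prefix_length_le h (List.prefix_append _ _) hl)
    · refine Or.inr (h.eq_of_length ?_)
      have := h.length_le
      simp only [List.length_append, List.length_singleton] at this ⊢
      omega
  · rintro (h | rfl)
    · exact h.trans (List.prefix_append _ _)
    · exact List.prefix_rfl


/-- K for our chosen encoding -/
abbrev KK : Set cSp := Kset enc

lemma AsubK : Aset enc ∪ -Aset enc ⊆ KK :=
  (subset_convexHull ℝ _).trans subset_closure

lemma KsubBall : KK ⊆ Metric.closedBall 0 1 := by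
  apply closure_minimal _ Metric.isClosed_closedBall
  apply convexHull_min _ (convex_closedBall 0 1)
  rintro v (⟨α, rfl⟩ | hv)
  · rw [Metric.mem_closedBall, dist_zero_right]; exact norm_xel_le α
  · rw [Set.mem_neg] at hv
    obtain ⟨α, hα⟩ := hv
    have hv' : v = -xel enc α := by rw [hα, neg_neg]
    rw [hv', Metric.mem_closedBall, dist_zero_right, norm_neg]
    exact norm_xel_le α

lemma Kclosed : IsClosed KK := isClosed_closure

lemma Kconvex : Convex ℝ KK := (convex_convexHull ℝ _).closure

lemma Ksymm : KK = -KK := by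
  have hS : -(Aset enc ∪ -Aset enc) = Aset enc ∪ -Aset enc := by
    rw [Set.union_neg, neg_neg, Set.union_comm]
  show Kset enc = -Kset enc
  rw [Kset]
  conv_rhs => rw [neg_closure, ← convexHull_neg, hS]

/-- the standard basis vector -/
def del (m : ℕ+) : cSp :=
  ⟨Pi.single m (1:ℝ), by
    apply memℓp_infty
    refine ⟨1, ?_⟩
    rintro r ⟨i, rfl⟩
    by_cases h : i = m <;> simp [h, Pi.single_apply]⟩

lemma del_apply (m i : ℕ+) : (del m : ℕ+ → ℝ) i = if i = m then 1 else 0 := by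
  simp [del, Pi.single_apply]

lemma xel_snoc (α : List ℕ+) (j : ℕ+) :
    xel enc (α ++ [j]) = xel enc α + (2:ℝ) • del (enc (α ++ [j])) := by
  apply lp.ext
  funext i
  rw [lp.coeFn_add, lp.coeFn_smul]
  simp only [Pi.add_apply, Pi.smul_apply, smul_eq_mul]
  rw [xel_apply, xel_apply, del_apply]
  by_cases hi : i = enc (α ++ [j])
  · subst hi
    rw [Equiv.symm_apply_apply]
    have h1 : α ++ [j] <+: α ++ [j] := List.prefix_rfl
    have h2 : ¬ (α ++ [j] <+: α) := by
      intro h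
      have := h.length_le
      simp at this
    norm_num [h1, h2]
  · have : enc.symm i ≠ α ++ [j] := by
      intro h; apply hi; rw [← h, Equiv.apply_symm_apply]
    have hiff : (enc.symm i <+: α ++ [j]) ↔ enc.symm i <+: α := by
      rw [prefix_snoc_iff]; simp [this]
    simp only [hiff, if_neg hi]
    ring


instance : NoMaxOrder ℕ+ :=
  ⟨fun a => ⟨a + 1, PNat.lt_add_right a 1⟩⟩

lemma dist_apply_le (x y : cSp) (i : ℕ+) : dist ((x : ℕ+ → ℝ) i) (y i) ≤ dist x y := by
  rw [Real.dist_eq, dist_eq_norm]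
  have := lp.norm_apply_le_norm ENNReal.top_ne_zero (x - y) i
  rwa [lp.coeFn_sub] at this

/-- the set of convergent sequences -/
def Cset : Set cSp := {x : cSp | ∃ l : ℝ, Tendsto (x : ℕ+ → ℝ) atTop (𝓝 l)}

lemma prefixes_finite (α : List ℕ+) : {γ : List ℕ+ | γ <+: α}.Finite := by
  apply (Set.finite_range (fun k : Fin (α.length + 1) => α.take k.val)).subset
  intro γ hγ
  refine ⟨⟨γ.length, by have := hγ.length_le; omega⟩, ?_⟩
  simp only
  rw [← List.prefix_iff_eq_take.mp hγ]

lemma xel_tendsto (α : List ℕ+) : Tendsto (xel enc α : ℕ+ → ℝ) atTop (𝓝 (-1)) := by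
  have hfin : {m : ℕ+ | enc.symm m <+: α}.Finite := by
    apply Set.Finite.preimage (Set.injOn_of_injective enc.symm.injective) (prefixes_finite α)
  apply tendsto_const_nhds.congr'
  have hev : ∀ᶠ m in (atTop : Filter ℕ+), m ∉ {m : ℕ+ | enc.symm m <+: α} :=
    hfin.eventually_cofinite_notMem.filter_mono atTop_le_cofinite
  exact hev.mono fun m hm => by rw [xel_apply, if_neg (by exact hm)]

lemma Cset_convex : Convex ℝ Cset := by
  intro x hx y hy a b _ _ _
  obtain ⟨l, hl⟩ := hx; obtain ⟨l', hl'⟩ := hy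
  refine ⟨a * l + b * l', ?_⟩
  have hco : ((a • x + b • y : cSp) : ℕ+ → ℝ) = fun m => a * x m + b * y m := by
    rw [lp.coeFn_add, lp.coeFn_smul, lp.coeFn_smul]; rfl
  rw [hco]
  exact ((hl.const_mul a)).add ((hl'.const_mul b))

lemma Cset_closed : IsClosed Cset := by
  apply isClosed_of_closure_subset
  intro x hx
  have hc : CauchySeq (x : ℕ+ → ℝ) := by
    rw [Metric.cauchySeq_iff]
    intro ε hε
    obtain ⟨y, hyC, hxy⟩ := Metric.mem_closure_iff.mp hx (ε/3) (by linarith)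
    obtain ⟨l, hl⟩ := hyC
    have hyc := hl.cauchySeq
    rw [Metric.cauchySeq_iff] at hyc
    obtain ⟨N, hN⟩ := hyc (ε/3) (by linarith)
    refine ⟨N, fun m hm k hk => ?_⟩
    have h1 := dist_apply_le x y m
    have h2 := dist_apply_le x y k
    have h3 := hN m hm k hk
    calc dist ((x : ℕ+ → ℝ) m) (x k)
        ≤ dist ((x : ℕ+ → ℝ) m) (y m) + dist ((y : ℕ+ → ℝ) m) (y k)
            + dist ((y : ℕ+ → ℝ) k) (x k) := dist_triangle4 _ _ _ _
      _ < ε := by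
          rw [dist_comm ((y : ℕ+ → ℝ) k)] at *
          linarith
  obtain ⟨l, hl⟩ := cauchySeq_tendsto_of_complete hc
  exact ⟨l, hl⟩

lemma KsubC : KK ⊆ Cset := by
  apply closure_minimal _ Cset_closed
  apply convexHull_min _ Cset_convex
  rintro v (⟨α, rfl⟩ | hv)
  · exact ⟨-1, xel_tendsto α⟩
  · rw [Set.mem_neg] at hv
    obtain ⟨α, hα⟩ := hv
    have hv' : v = -xel enc α := by rw [hα, neg_neg]
    subst hv'
    refine ⟨1, ?_⟩
    have hco : ((-xel enc α : cSp) : ℕ+ → ℝ) = fun m => -(xel enc α : ℕ+ → ℝ) m := by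
      rw [lp.coeFn_neg]; rfl
    rw [hco]
    simpa using (xel_tendsto α).neg


lemma norm_del_sum_le (S : Finset ℕ+) (σ : ℕ+ → ℝ) (hσ : ∀ m, |σ m| ≤ 1) :
    ‖∑ m ∈ S, σ m • del m‖ ≤ 1 := by
  apply lp.norm_le_of_forall_le zero_le_one
  intro i
  have hco : ((∑ m ∈ S, σ m • del m : cSp) : ℕ+ → ℝ) i
      = ∑ m ∈ S, σ m * (del m : ℕ+ → ℝ) i := by
    rw [← coord_apply, map_sum]
    exact Finset.sum_congr rfl fun m _ => by rw [map_smul]; rfl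
  rw [hco]
  have : ∑ m ∈ S, σ m * (del m : ℕ+ → ℝ) i = if i ∈ S then σ i else 0 := by
    rw [← Finset.sum_ite_eq S i σ]
    refine Finset.sum_congr rfl fun m _ => ?_
    rw [del_apply]
    by_cases h : i = m <;> simp [h]
  rw [this]
  by_cases h : i ∈ S <;> simp [h, hσ i]

lemma summable_dual_del (f : StrongDual ℝ cSp) :
    Summable fun m : ℕ+ => |f (del m)| := by
  apply summable_of_sum_le (fun m => abs_nonneg _)
  intro S
  classical
  set σ : ℕ+ → ℝ := fun m => if f (del m) < 0 then -1 else 1 with hσdef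
  have hσ : ∀ m, |σ m| ≤ 1 := by
    intro m; by_cases h : f (del m) < 0 <;> simp [hσdef, h]
  have h1 : ∀ m, |f (del m)| = f (σ m • del m) := by
    intro m
    rw [map_smul, smul_eq_mul]
    by_cases h : f (del m) < 0
    · rw [abs_of_neg h]; simp [hσdef, h]
    · rw [abs_of_nonneg (not_lt.mp h)]; simp [hσdef, h]
  calc ∑ m ∈ S, |f (del m)| = ∑ m ∈ S, f (σ m • del m) :=
        Finset.sum_congr rfl fun m _ => h1 m
    _ = f (∑ m ∈ S, σ m • del m) := (map_sum f _ S).symm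
    _ ≤ ‖f‖ := by
        have h2 := f.le_opNorm (∑ m ∈ S, σ m • del m)
        have h3 := norm_del_sum_le S σ hσ
        have h4 : ‖f (∑ m ∈ S, σ m • del m)‖ ≤ ‖f‖ := by
          apply h2.trans
          have : ‖f‖ * ‖∑ m ∈ S, σ m • del m‖ ≤ ‖f‖ * 1 :=
            mul_le_mul_of_nonneg_left h3 (norm_nonneg f)
          simpa using this
        exact (le_abs_self _).trans h4

lemma dual_del_tendsto (f : StrongDual ℝ cSp) :
    Tendsto (fun m : ℕ+ => f (del m)) cofinite (𝓝 0) :=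
  ((summable_dual_del f).of_abs).tendsto_cofinite_zero

lemma fconvexOn (f : StrongDual ℝ cSp) : ConvexOn ℝ (Set.univ : Set cSp) f :=
  ⟨convex_univ, fun x _ y _ a b _ _ _ => le_of_eq (by simp)⟩

lemma diam_le_two {S : Set cSp} (hS : S ⊆ Metric.closedBall 0 1) : Metric.diam S ≤ 2 := by
  have h := Metric.diam_mono hS Metric.isBounded_closedBall
  calc Metric.diam S ≤ Metric.diam (Metric.closedBall (0:cSp) 1) := h
    _ ≤ 2 * 1 := Metric.diam_closedBall zero_le_one
    _ = 2 := by norm_num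

lemma norm_le_one_of_memK {x : cSp} (hx : x ∈ KK) : ‖x‖ ≤ 1 := by
  have := KsubBall hx
  rwa [Metric.mem_closedBall, dist_zero_right] at this

lemma mem_AunionA (s : ℝ) (hs : s = 1 ∨ s = -1) (α : List ℕ+) :
    s • xel enc α ∈ Aset enc ∪ -Aset enc := by
  rcases hs with rfl | rfl
  · exact Or.inl ⟨α, (one_smul ℝ _).symm⟩
  · refine Or.inr ?_
    rw [Set.mem_neg]
    exact ⟨α, by rw [neg_smul, one_smul, neg_neg]⟩

lemma slice_diam (f : StrongDual ℝ cSp) (lam : ℝ) (hlam : 0 < lam) :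
    Metric.diam {x ∈ KK | sSup (f '' KK) - lam < f x} = 2 := by
  set M := sSup (f '' KK) with hM
  have hne : (f '' KK).Nonempty := ⟨f (xel enc []), xel enc [], AsubK (Or.inl ⟨[], rfl⟩), rfl⟩
  -- find a near-maximizer in A ∪ -A
  obtain ⟨y, ⟨z, hzK, rfl⟩, hz⟩ := exists_lt_of_lt_csSup hne
    (show M - lam/2 < M by linarith)
  set θ := f z - (M - lam/2) with hθdef
  have hθ : 0 < θ := by simp only [hθdef]; linarith
  have hq : 0 < θ/(‖f‖+1) := div_pos hθ (by positivity)
  obtain ⟨z', hz'H, hzz'⟩ := Metric.mem_closure_iff.mp hzK (θ/(‖f‖+1)) hq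
  have hfz' : M - lam/2 < f z' := by
    have h1 : f z - f z' ≤ ‖f‖ * ‖z - z'‖ := by
      calc f z - f z' = f (z - z') := by rw [map_sub]
        _ ≤ ‖f (z - z')‖ := le_abs_self _
        _ ≤ ‖f‖ * ‖z - z'‖ := f.le_opNorm _
    have h3 : ‖z - z'‖ < θ/(‖f‖+1) := by rwa [← dist_eq_norm]
    have h4 : ‖f‖ * ‖z - z'‖ ≤ ‖f‖ * (θ/(‖f‖+1)) :=
      mul_le_mul_of_nonneg_left h3.le (norm_nonneg f)
    have h5 : ‖f‖ * (θ/(‖f‖+1)) < θ := by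
      rw [mul_div_assoc']
      rw [div_lt_iff₀ (by positivity)]
      nlinarith [norm_nonneg f]
    have h2 : ‖f‖ * ‖z - z'‖ < θ := lt_of_le_of_lt h4 h5
    have h6 : f z - f z' < θ := lt_of_le_of_lt h1 h2
    rw [hθdef] at h6
    linarith
  obtain ⟨w, hwA, hfw⟩ := (fconvexOn f).exists_ge_of_mem_convexHull
    (Set.subset_univ _) hz'H
  obtain ⟨s, α, hs, rfl⟩ : ∃ s : ℝ, ∃ α, (s = 1 ∨ s = -1) ∧ w = s • xel enc α := by
    rcases hwA with ⟨α, rfl⟩ | hw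
    · exact ⟨1, α, Or.inl rfl, (one_smul ℝ _).symm⟩
    · rw [Set.mem_neg] at hw
      obtain ⟨α, hα⟩ := hw
      exact ⟨-1, α, Or.inr rfl, by rw [neg_smul, one_smul, hα, neg_neg]⟩
  have hfwM : M - lam/2 < f (s • xel enc α) := lt_of_lt_of_le hfz' hfw
  -- points along the branch
  have hval : ∀ j : ℕ+, f (s • xel enc (α ++ [j]))
      = f (s • xel enc α) + (2*s) * f (del (enc (α ++ [j]))) := by
    intro j
    simp only [xel_snoc, smul_add, map_add, smul_smul, map_smul, smul_eq_mul]
    ring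
  have hinj : Function.Injective fun j : ℕ+ => enc (α ++ [j]) := by
    intro j j' h
    have := enc.injective h
    simpa using this
  have htd : Tendsto (fun j : ℕ+ => (2*s) * f (del (enc (α ++ [j])))) cofinite (𝓝 0) := by
    have h0 := (dual_del_tendsto f).comp hinj.tendsto_cofinite
    simpa using h0.const_mul (2*s)
  have hev : ∀ᶠ j in (cofinite : Filter ℕ+), ‖(2*s) * f (del (enc (α ++ [j])))‖ < lam/2 :=
    (NormedAddCommGroup.tendsto_nhds_zero.mp htd) (lam/2) (half_pos hlam)
  have hinf : {j : ℕ+ | ‖(2*s) * f (del (enc (α ++ [j])))‖ < lam/2}.Infinite := by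
    have hfin := Filter.eventually_cofinite.mp hev
    have h8 := hfin.infinite_compl
    rw [Set.compl_setOf] at h8
    simp only [not_not] at h8
    exact h8
  obtain ⟨j, hj⟩ := hinf.nonempty
  obtain ⟨j', hj'mem⟩ := (hinf.diff (Set.finite_singleton j)).nonempty
  obtain ⟨hj', hjj'⟩ := hj'mem
  have hjj' : j' ≠ j := by simpa using hjj'
  -- membership in slice
  have hmem : ∀ k : ℕ+, ‖(2*s) * f (del (enc (α ++ [k])))‖ < lam/2 →
      s • xel enc (α ++ [k]) ∈ {x ∈ KK | M - lam < f x} := by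
    intro k hk
    refine ⟨AsubK (mem_AunionA s hs _), ?_⟩
    rw [hval k]
    have := neg_abs_le ((2*s) * f (del (enc (α ++ [k]))))
    rw [Real.norm_eq_abs] at hk
    have h6 : -(lam/2) < (2*s) * f (del (enc (α ++ [k]))) := by
      have := (abs_lt.mp hk).1
      linarith
    linarith
  have hmj := hmem j hj
  have hmj' := hmem j' hj'
  -- distance 2
  have hdist : (2:ℝ) ≤ dist (s • xel enc (α ++ [j])) (s • xel enc (α ++ [j'])) := by
    have h7 := dist_apply_le (s • xel enc (α ++ [j])) (s • xel enc (α ++ [j'])) (enc (α ++ [j]))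
    have hc1 : ((s • xel enc (α ++ [j]) : cSp) : ℕ+ → ℝ) (enc (α ++ [j])) = s := by
      rw [lp.coeFn_smul]
      simp only [Pi.smul_apply, smul_eq_mul]
      rw [xel_apply_enc]
      simp [List.prefix_rfl]
    have hc2 : ((s • xel enc (α ++ [j']) : cSp) : ℕ+ → ℝ) (enc (α ++ [j])) = -s := by
      rw [lp.coeFn_smul]
      simp only [Pi.smul_apply, smul_eq_mul]
      rw [xel_apply_enc]
      have hnp : ¬ (α ++ [j] <+: α ++ [j']) := by
        intro h
        have := h.eq_of_length (by simp)
        have : j = j' := by simpa using this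
        exact hjj' this.symm
      rw [if_neg hnp]
      ring
    rw [hc1, hc2, Real.dist_eq] at h7
    have habs : |s - -s| = 2 := by
      rcases hs with rfl | rfl <;> norm_num
    rw [habs] at h7
    exact h7
  -- conclude
  have hsub : {x ∈ KK | M - lam < f x} ⊆ Metric.closedBall 0 1 :=
    fun x hx => KsubBall hx.1
  refine le_antisymm (diam_le_two hsub) ?_
  calc (2:ℝ) ≤ dist (s • xel enc (α ++ [j])) (s • xel enc (α ++ [j'])) := hdist
    _ ≤ Metric.diam {x ∈ KK | M - lam < f x} :=
        Metric.dist_le_diam_of_mem (Metric.isBounded_closedBall.subset hsub) hmj hmj'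


lemma xel_nil_mem : xel enc [] ∈ KK := AsubK (Or.inl ⟨[], rfl⟩)

lemma neg_xel_nil_mem : -xel enc [] ∈ KK := by
  apply AsubK
  right
  rw [Set.mem_neg, neg_neg]
  exact ⟨[], rfl⟩

lemma Kdiam : Metric.diam KK = 2 := by
  refine le_antisymm (diam_le_two KsubBall) ?_
  have h7 := dist_apply_le (xel enc []) (-xel enc []) (enc [])
  have hc1 : (xel enc [] : ℕ+ → ℝ) (enc []) = 1 := by
    rw [xel_apply_enc]; simp
  have hc2 : ((-xel enc [] : cSp) : ℕ+ → ℝ) (enc []) = -1 := by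
    rw [lp.coeFn_neg, Pi.neg_apply, hc1]
  rw [hc1, hc2, Real.dist_eq] at h7
  norm_num at h7
  calc (2:ℝ) ≤ dist (xel enc []) (-xel enc []) := h7
    _ ≤ Metric.diam KK :=
      Metric.dist_le_diam_of_mem (Metric.isBounded_closedBall.subset KsubBall)
        xel_nil_mem neg_xel_nil_mem

lemma hull_rep {x : cSp} (hx : x ∈ convexHull ℝ (Aset enc ∪ -Aset enc)) :
    ∃ (ι : Type) (t : Finset ι) (w : ι → ℝ) (sg : ι → ℝ) (β : ι → List ℕ+),
      (∀ i ∈ t, 0 ≤ w i) ∧ (∑ i ∈ t, w i) = 1 ∧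
      (∀ i ∈ t, sg i = 1 ∨ sg i = -1) ∧
      (∀ γ : List ℕ+, (x : ℕ+ → ℝ) (enc γ)
        = ∑ i ∈ t, w i * sg i * (if γ <+: β i then 1 else -1)) := by
  rw [convexHull_eq] at hx
  obtain ⟨ι, t, w, z, hw0, hw1, hz, rfl⟩ := hx
  have hch : ∀ i, ∃ (s : ℝ) (β : List ℕ+),
      (i ∈ t → ((s = 1 ∨ s = -1) ∧ z i = s • xel enc β)) := by
    intro i
    by_cases hi : i ∈ t
    · rcases hz i hi with ⟨β, hβ⟩ | hmem
      · exact ⟨1, β, fun _ => ⟨Or.inl rfl, by rw [one_smul, hβ]⟩⟩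
      · rw [Set.mem_neg] at hmem
        obtain ⟨β, hβ⟩ := hmem
        refine ⟨-1, β, fun _ => ⟨Or.inr rfl, ?_⟩⟩
        rw [neg_smul, one_smul, hβ, neg_neg]
    · exact ⟨1, [], fun h => absurd h hi⟩
  choose sg β hval using hch
  refine ⟨ι, t, w, sg, β, hw0, hw1, fun i hi => (hval i hi).1, ?_⟩
  intro γ
  rw [← coord_apply, Finset.centerMass_eq_of_sum_1 _ _ hw1, map_sum]
  refine Finset.sum_congr rfl fun i hi => ?_
  rw [map_smul, smul_eq_mul, coord_apply, (hval i hi).2]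
  rw [lp.coeFn_smul]
  simp only [Pi.smul_apply, smul_eq_mul]
  rw [xel_apply_enc]
  ring


/-- target profile -/
def Tn (n : ℕ+) : List ℕ+ → ℝ
  | [] => 1
  | j :: rest => if j ≤ n ∧ rest = [] then 2/(n:ℝ) - 1 else -1

lemma key_estimate (n : ℕ+) (ε : ℝ) (hε : 0 < ε) (x : cSp)
    (hx : x ∈ convexHull ℝ (Aset enc ∪ -Aset enc))
    (h0 : 1 - ε < (x : ℕ+ → ℝ) (enc []))
    (hj : ∀ j : ℕ+, j ≤ n → |(x : ℕ+ → ℝ) (enc [j]) - (2/(n:ℝ) - 1)| < ε)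
    (γ : List ℕ+) :
    |(x : ℕ+ → ℝ) (enc γ) - Tn n γ| ≤ 2/(n:ℝ) + 8*(n:ℝ)*ε := by
  classical
  obtain ⟨ι, t, w, sg, β, hw0, hw1, hsg, hrep⟩ := hull_rep hx
  set p : List ℕ+ → ℝ :=
    fun γ' => ∑ i ∈ t, (if sg i = 1 ∧ γ' <+: β i then w i else 0) with hpdef
  set q : List ℕ+ → ℝ :=
    fun γ' => ∑ i ∈ t, (if sg i = -1 ∧ γ' <+: β i then w i else 0) with hqdef
  -- coordinate formula
  have F1 : ∀ γ' : List ℕ+,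
      (x : ℕ+ → ℝ) (enc γ') = 2*(p γ') - 2*(q γ') - p [] + q [] := by
    intro γ'
    rw [hrep γ']
    have hsplit : ∀ i ∈ t, w i * sg i * (if γ' <+: β i then 1 else -1)
        = 2*(if sg i = 1 ∧ γ' <+: β i then w i else 0)
          - 2*(if sg i = -1 ∧ γ' <+: β i then w i else 0)
          - (if sg i = 1 ∧ ([] : List ℕ+) <+: β i then w i else 0)
          + (if sg i = -1 ∧ ([] : List ℕ+) <+: β i then w i else 0) := by
      intro i hi
      rcases hsg i hi with h | h <;> by_cases hp : γ' <+: β i <;>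
        norm_num [h, hp, List.nil_prefix] <;> ring
    rw [Finset.sum_congr rfl hsplit]
    simp only [hpdef, hqdef]
    rw [Finset.sum_add_distrib, Finset.sum_sub_distrib, Finset.sum_sub_distrib,
      ← Finset.mul_sum, ← Finset.mul_sum]
  -- positivity and monotonicity
  have hp0 : ∀ γ', 0 ≤ p γ' := by
    intro γ'
    apply Finset.sum_nonneg
    intro i hi
    by_cases h : sg i = 1 ∧ γ' <+: β i <;> simp [h, hw0 i hi]
  have hq0 : ∀ γ', 0 ≤ q γ' := by
    intro γ'
    apply Finset.sum_nonneg
    intro i hi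
    by_cases h : sg i = -1 ∧ γ' <+: β i <;> simp [h, hw0 i hi]
  have hpmono : ∀ γ₁ γ₂ : List ℕ+, γ₁ <+: γ₂ → p γ₂ ≤ p γ₁ := by
    intro γ₁ γ₂ hpre
    apply Finset.sum_le_sum
    intro i hi
    by_cases h : sg i = 1 ∧ γ₂ <+: β i
    · rw [if_pos h, if_pos ⟨h.1, hpre.trans h.2⟩]
    · rw [if_neg h]
      by_cases h' : sg i = 1 ∧ γ₁ <+: β i <;> simp [h', hw0 i hi]
  have hqmono : ∀ γ₁ γ₂ : List ℕ+, γ₁ <+: γ₂ → q γ₂ ≤ q γ₁ := by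
    intro γ₁ γ₂ hpre
    apply Finset.sum_le_sum
    intro i hi
    by_cases h : sg i = -1 ∧ γ₂ <+: β i
    · rw [if_pos h, if_pos ⟨h.1, hpre.trans h.2⟩]
    · rw [if_neg h]
      by_cases h' : sg i = -1 ∧ γ₁ <+: β i <;> simp [h', hw0 i hi]
  have htot : p [] + q [] = 1 := by
    have hterm : ∀ i ∈ t, (if sg i = 1 ∧ ([] : List ℕ+) <+: β i then w i else 0)
        + (if sg i = -1 ∧ ([] : List ℕ+) <+: β i then w i else 0) = w i := by
      intro i hi
      rcases hsg i hi with h | h <;> norm_num [h, List.nil_prefix]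
    rw [hpdef, hqdef, ← Finset.sum_add_distrib, Finset.sum_congr rfl hterm]
    exact hw1
  -- disjointness
  have hdisj : ∀ J : Finset ℕ+, ∑ j ∈ J, p [j] ≤ p [] := by
    intro J
    rw [hpdef]
    rw [Finset.sum_comm]
    apply Finset.sum_le_sum
    intro i hi
    rcases hb : β i with _ | ⟨b0, rest⟩
    · have hz : ∀ j ∈ J, (if sg i = 1 ∧ [j] <+: ([] : List ℕ+) then w i else 0) = 0 := by
        intro j _
        rw [if_neg]
        rintro ⟨-, hpre⟩
        simpa using hpre.length_le
      rw [Finset.sum_congr rfl hz, Finset.sum_const_zero]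
      by_cases h : sg i = 1 <;> simp [h, hw0 i hi, List.nil_prefix]
    · have hiff : ∀ j : ℕ+, ([j] <+: b0 :: rest) ↔ j = b0 := by
        intro j
        rw [List.cons_prefix_cons]
        simp [List.nil_prefix]
      by_cases hsg1 : sg i = 1
      · have heq : ∀ j ∈ J, (if sg i = 1 ∧ [j] <+: b0 :: rest then w i else 0)
            = (if j = b0 then w i else 0) := by
          intro j _
          simp [hiff j, hsg1]
        rw [Finset.sum_congr rfl heq, Finset.sum_ite_eq' J b0 (fun _ => w i)]
        have hR : (if sg i = 1 ∧ ([] : List ℕ+) <+: b0 :: rest then w i else 0) = w i := by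
          simp [hsg1, List.nil_prefix]
        rw [hR]
        by_cases h : b0 ∈ J <;> simp [h, hw0 i hi]
      · have heq : ∀ j ∈ J, (if sg i = 1 ∧ [j] <+: b0 :: rest then w i else 0) = 0 := by
          intro j _
          simp [hsg1]
        rw [Finset.sum_congr rfl heq, Finset.sum_const_zero]
        by_cases h : sg i = 1 <;> simp [h, hw0 i hi, List.nil_prefix]
  -- numeric facts
  have hn1 : (1:ℝ) ≤ (n:ℝ) := by exact_mod_cast n.one_le
  have hn0 : (0:ℝ) < (n:ℝ) := by positivity
  have h2inv : 2/(n:ℝ) = 2*(1/(n:ℝ)) := by ring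
  have hD := F1 []
  have hDval : (x : ℕ+ → ℝ) (enc []) = p [] - q [] := by rw [hD]; ring
  have hqe : q [] ≤ ε/2 := by
    have := h0
    rw [hDval] at this
    linarith
  have hpe : p [] ≤ 1 := by linarith [hq0 []]
  have hDlow : 1 - ε < p [] - q [] := by rw [hDval] at h0; exact h0
  have hDhigh : p [] - q [] ≤ 1 := by linarith [hq0 []]
  -- p[j] bounds for j ≤ n
  have hpj : ∀ j : ℕ+, j ≤ n →
      1/(n:ℝ) - (3/2)*ε ≤ p [j] ∧ p [j] ≤ 1/(n:ℝ) + (3/2)*ε := by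
    intro j hjn
    have hxj := hj j hjn
    rw [abs_lt] at hxj
    have hF := F1 [j]
    have hql : q [j] ≤ ε/2 := le_trans (hqmono [] [j] (List.nil_prefix)) hqe
    have hqlj := hq0 [j]
    constructor <;> [linarith [hxj.1, h2inv]; linarith [hxj.2, h2inv]]
  -- sum over Icc 1 n
  have hcard : (Finset.Icc (1:ℕ+) n).card = (n:ℕ) := by
    rw [PNat.card_Icc]
    simp
  have hsumlow : 1 - (3/2)*(n:ℝ)*ε ≤ ∑ j ∈ Finset.Icc (1:ℕ+) n, p [j] := by
    have h9 : ∀ j ∈ Finset.Icc (1:ℕ+) n, 1/(n:ℝ) - (3/2)*ε ≤ p [j] := by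
      intro j hjn
      exact (hpj j (Finset.mem_Icc.mp hjn).2).1
    have h10 := Finset.card_nsmul_le_sum (Finset.Icc (1:ℕ+) n) _ _ h9
    rw [hcard, nsmul_eq_mul] at h10
    have : ((n:ℕ):ℝ) = (n:ℝ) := by norm_cast
    rw [this] at h10
    have hexp : (n:ℝ) * (1/(n:ℝ) - (3/2)*ε) = 1 - (3/2)*(n:ℝ)*ε := by
      field_simp
    linarith [h10, hexp ▸ h10]
  -- the case analysis
  rcases γ with _ | ⟨j0, rest⟩
  · -- γ = []
    have hTn : Tn n [] = 1 := rfl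
    rw [hTn, hDval, abs_le]
    have hεn : ε ≤ (n:ℝ)*ε := le_mul_of_one_le_left hε.le hn1
    have h2n : 0 < 2/(n:ℝ) := by positivity
    constructor <;> linarith [hq0 [], hp0 [], h2inv]
  · by_cases hcase : j0 ≤ n ∧ rest = []
    · obtain ⟨hj0n, rfl⟩ := hcase
      have hTn : Tn n [j0] = 2/(n:ℝ) - 1 := by
        rw [Tn, if_pos ⟨hj0n, rfl⟩]
      rw [hTn]
      have hxj := hj j0 hj0n
      have hεn : ε ≤ (n:ℝ)*ε := le_mul_of_one_le_left hε.le hn1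
      have h2n : 0 < 2/(n:ℝ) := by positivity
      rw [abs_lt] at hxj
      rw [abs_le]
      constructor <;> linarith
    · have hTn : Tn n (j0 :: rest) = -1 := by
        rw [Tn, if_neg hcase]
      rw [hTn]
      have hpre1 : [j0] <+: j0 :: rest := by
        rw [List.cons_prefix_cons]
        exact ⟨rfl, List.nil_prefix⟩
      have hple : p (j0 :: rest) ≤ p [j0] := hpmono _ _ hpre1
      have hqle : q (j0 :: rest) ≤ ε/2 :=
        le_trans (hqmono [] _ (List.nil_prefix)) hqe
      have hF := F1 (j0 :: rest)
      have hεn : ε ≤ (n:ℝ)*ε := le_mul_of_one_le_left hε.le hn1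
      have h2n : 0 < 2/(n:ℝ) := by positivity
      have hpb : p [j0] ≤ 1/(n:ℝ) + (3/2)*(n:ℝ)*ε := by
        by_cases hj0n : j0 ≤ n
        · have := (hpj j0 hj0n).2
          have h11 : (3/2)*ε ≤ (3/2)*(n:ℝ)*ε := by nlinarith
          linarith
        · -- j0 > n : disjointness
          have hnotmem : j0 ∉ Finset.Icc (1:ℕ+) n := by
            rw [Finset.mem_Icc]
            push_neg
            intro _
            exact lt_of_not_ge hj0n
          have h12 := hdisj (insert j0 (Finset.Icc (1:ℕ+) n))
          rw [Finset.sum_insert hnotmem] at h12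
          have h13 : 0 ≤ 1/(n:ℝ) := by positivity
          linarith [hsumlow, hpe]
      rw [abs_le]
      constructor <;> linarith [hp0 (j0 :: rest), hq0 (j0 :: rest), h2inv]


lemma dist_le_of_coords (x y : cSp) (B : ℝ) (hB : 0 ≤ B)
    (h : ∀ i : ℕ+, |(x : ℕ+ → ℝ) i - (y : ℕ+ → ℝ) i| ≤ B) : dist x y ≤ B := by
  rw [dist_eq_norm]
  apply lp.norm_le_of_forall_le hB
  intro i
  rw [lp.coeFn_sub]
  exact h i

lemma weak_opens (δ : ℝ) (hδ : 0 < δ) :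
    ∃ V : Set cSp, WOpen V ∧ (V ∩ KK).Nonempty ∧ Metric.diam (V ∩ KK) < δ := by
  classical
  obtain ⟨n0, hn0⟩ := exists_nat_gt (16/δ)
  set n : ℕ+ := ⟨n0 + 1, Nat.succ_pos n0⟩ with hn
  have hnR : (16:ℝ)/δ < (n:ℝ) := by
    have h2 : (n:ℕ) = n0 + 1 := rfl
    have h1 : ((n:ℕ):ℝ) = (n0:ℝ) + 1 := by rw [h2]; push_cast; ring
    rw [h1]
    linarith
  have hnpos : (0:ℝ) < (n:ℝ) := by positivity
  have h4n : 4/(n:ℝ) < δ/4 := by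
    rw [div_lt_iff₀ hnpos]
    rw [div_lt_iff₀ hδ] at hnR
    nlinarith
  set ε : ℝ := δ/(128*(n:ℝ)) with hεdef
  have hεpos : 0 < ε := by rw [hεdef]; positivity
  have h16 : 16*(n:ℝ)*ε = δ/8 := by
    rw [hεdef]
    field_simp
    ring
  set B : ℝ := 2/(n:ℝ) + 8*(n:ℝ)*ε with hBdef
  have hBpos : 0 ≤ B := by rw [hBdef]; positivity
  have h2B : 2*B ≤ δ/2 := by
    rw [hBdef]
    have : 2*(2/(n:ℝ)) = 4/(n:ℝ) := by ring
    nlinarith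
  set c : ℝ := 2/(n:ℝ) - 1 with hcdef
  set V : Set cSp := {x : cSp | 1 - ε < coord (enc []) x} ∩
      ⋂ j ∈ Finset.Icc (1:ℕ+) n, {x : cSp | |coord (enc [j]) x - c| < ε} with hVdef
  -- membership characterization
  have hVmem : ∀ x : cSp, x ∈ V ↔
      (1 - ε < (x : ℕ+ → ℝ) (enc []) ∧
        ∀ j : ℕ+, j ≤ n → |(x : ℕ+ → ℝ) (enc [j]) - c| < ε) := by
    intro x
    rw [hVdef]
    constructor
    · rintro ⟨h1, h2⟩
      refine ⟨h1, fun j hj => ?_⟩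
      have hjmem : j ∈ Finset.Icc (1:ℕ+) n := Finset.mem_Icc.mpr ⟨j.one_le, hj⟩
      exact Set.mem_iInter₂.mp h2 j hjmem
    · rintro ⟨h1, h2⟩
      refine ⟨h1, Set.mem_iInter₂.mpr fun j hj => h2 j (Finset.mem_Icc.mp hj).2⟩
  refine ⟨V, ?_, ?_, ?_⟩
  · -- weakly open
    rw [hVdef]
    apply IsOpen.inter
    · have : {x : cSp | 1 - ε < coord (enc []) x}
          = (fun x : WeakSpace ℝ cSp => coord (enc []) x) ⁻¹' Set.Ioi (1 - ε) := rfl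
      rw [this]
      exact isOpen_Ioi.preimage (coord_wcont (enc []))
    · apply isOpen_biInter_finset
      intro j _
      have : {x : cSp | |coord (enc [j]) x - c| < ε}
          = (fun x : WeakSpace ℝ cSp => coord (enc [j]) x) ⁻¹' Metric.ball c ε := by
        ext x
        simp [Metric.mem_ball, Real.dist_eq]
        exact Iff.rfl
      rw [this]
      exact Metric.isOpen_ball.preimage (coord_wcont (enc [j]))
  · -- nonempty
    set P : cSp := (Finset.Icc (1:ℕ+) n).centerMass (fun _ => (1:ℝ))
      (fun j => xel enc [j]) with hPdef
    have hcard : (Finset.Icc (1:ℕ+) n).card = (n:ℕ) := by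
      rw [PNat.card_Icc]; simp
    have hsumw : ∑ _j ∈ Finset.Icc (1:ℕ+) n, (1:ℝ) = (n:ℝ) := by
      rw [Finset.sum_const, nsmul_eq_mul, mul_one, hcard]
    have hPco : ∀ m : ℕ+, (P : ℕ+ → ℝ) m
        = ((n:ℝ))⁻¹ * ∑ j ∈ Finset.Icc (1:ℕ+) n, (xel enc [j] : ℕ+ → ℝ) m := by
      intro m
      rw [← coord_apply, hPdef, Finset.centerMass, hsumw, map_smul, smul_eq_mul, map_sum]
      simp only [one_smul, coord_apply]
    have hPhull : P ∈ convexHull ℝ (Aset enc ∪ -Aset enc) := by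
      apply Finset.centerMass_mem_convexHull
      · intro i _; exact zero_le_one
      · rw [hsumw]; exact hnpos
      · intro i _; exact Or.inl ⟨[i], rfl⟩
    have hPV : P ∈ V := by
      rw [hVmem]
      constructor
      · rw [hPco]
        have : ∀ j ∈ Finset.Icc (1:ℕ+) n, (xel enc [j] : ℕ+ → ℝ) (enc []) = 1 := by
          intro j _
          rw [xel_apply_enc, if_pos (List.nil_prefix)]
        rw [Finset.sum_congr rfl this, Finset.sum_const, nsmul_eq_mul, mul_one, hcard]
        have hh : ((n:ℕ):ℝ) = (n:ℝ) := rfl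
        rw [hh, inv_mul_cancel₀ (ne_of_gt hnpos)]
        linarith
      · intro j hj
        rw [hPco]
        have hterm : ∀ j' ∈ Finset.Icc (1:ℕ+) n, (xel enc [j'] : ℕ+ → ℝ) (enc [j])
            = (if j' = j then (2:ℝ) else 0) - 1 := by
          intro j' _
          rw [xel_apply_enc]
          by_cases h : j = j'
          · subst h
            rw [if_pos List.prefix_rfl, if_pos rfl]
            norm_num
          · have hnp : ¬([j] <+: [j']) := by
              rw [List.cons_prefix_cons]
              simp [h]
            rw [if_neg hnp, if_neg (Ne.symm h)]
            norm_num
        rw [Finset.sum_congr rfl hterm, Finset.sum_sub_distrib,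
          Finset.sum_ite_eq' (Finset.Icc (1:ℕ+) n) j (fun _ => (2:ℝ)),
          if_pos (Finset.mem_Icc.mpr ⟨j.one_le, hj⟩), Finset.sum_const, nsmul_eq_mul,
          mul_one, hcard]
        have hh : ((n:ℕ):ℝ) = (n:ℝ) := rfl
        rw [hh, hcdef]
        have hexp : ((n:ℝ))⁻¹ * (2 - (n:ℝ)) - (2/(n:ℝ) - 1) = 0 := by
          field_simp
          ring
        rw [hexp]
        simpa using hεpos
    exact ⟨P, hPV, subset_closure hPhull⟩
  · -- small diameter
    -- norm-openness of V
    have hVopen : IsOpen V := by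
      rw [hVdef]
      apply IsOpen.inter
      · have : {x : cSp | 1 - ε < coord (enc []) x}
            = (fun x : cSp => coord (enc []) x) ⁻¹' Set.Ioi (1 - ε) := rfl
        rw [this]
        exact isOpen_Ioi.preimage (coord (enc [])).continuous
      · apply isOpen_biInter_finset
        intro j _
        have : {x : cSp | |coord (enc [j]) x - c| < ε}
            = (fun x : cSp => coord (enc [j]) x) ⁻¹' Metric.ball c ε := by
          ext x
          simp [Metric.mem_ball, Real.dist_eq]
        rw [this]
        exact Metric.isOpen_ball.preimage (coord (enc [j])).continuous
    have hkey : ∀ x' ∈ V, x' ∈ convexHull ℝ (Aset enc ∪ -Aset enc) →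
        ∀ γ : List ℕ+, |(x' : ℕ+ → ℝ) (enc γ) - Tn n γ| ≤ B := by
      intro x' hx'V hx'h γ
      rw [hVmem] at hx'V
      exact key_estimate n ε hεpos x' hx'h hx'V.1 hx'V.2 γ
    have happrox : ∀ x ∈ V ∩ KK, ∀ η : ℝ, 0 < η →
        ∃ x' ∈ V ∩ convexHull ℝ (Aset enc ∪ -Aset enc), dist x x' < η := by
      rintro x ⟨hxV, hxK⟩ η hη
      obtain ⟨r, hr, hball⟩ := Metric.isOpen_iff.mp hVopen x hxV
      obtain ⟨x', hx'h, hxx'⟩ := Metric.mem_closure_iff.mp hxK (min r η)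
        (lt_min hr hη)
      refine ⟨x', ⟨?_, hx'h⟩, lt_of_lt_of_le hxx' (min_le_right r η)⟩
      apply hball
      rw [Metric.mem_ball, dist_comm]
      exact lt_of_lt_of_le hxx' (min_le_left r η)
    have hdd : ∀ x ∈ V ∩ KK, ∀ y ∈ V ∩ KK, dist x y ≤ 2*B := by
      intro x hx y hy
      apply le_of_forall_pos_le_add
      intro η hη
      obtain ⟨x', ⟨hx'V, hx'h⟩, hxx'⟩ := happrox x hx (η/2) (by linarith)
      obtain ⟨y', ⟨hy'V, hy'h⟩, hyy'⟩ := happrox y hy (η/2) (by linarith)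
      have hmid : dist x' y' ≤ 2*B := by
        apply dist_le_of_coords _ _ _ (by linarith)
        intro i
        have h1 := hkey x' hx'V hx'h (enc.symm i)
        have h2 := hkey y' hy'V hy'h (enc.symm i)
        rw [Equiv.apply_symm_apply] at h1 h2
        calc |(x' : ℕ+ → ℝ) i - (y' : ℕ+ → ℝ) i|
            = |((x' : ℕ+ → ℝ) i - Tn n (enc.symm i))
              - ((y' : ℕ+ → ℝ) i - Tn n (enc.symm i))| := by ring_nf
          _ ≤ |(x' : ℕ+ → ℝ) i - Tn n (enc.symm i)|
              + |(y' : ℕ+ → ℝ) i - Tn n (enc.symm i)| := abs_sub _ _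
          _ ≤ 2*B := by linarith
      calc dist x y ≤ dist x x' + dist x' y' + dist y' y := dist_triangle4 _ _ _ _
        _ ≤ η/2 + 2*B + η/2 := by
            have hyy'' : dist y' y < η/2 := by rw [dist_comm]; exact hyy'
            exact add_le_add (add_le_add hxx'.le hmid) hyy''.le
        _ = 2*B + η := by ring
    have hdiam : Metric.diam (V ∩ KK) ≤ 2*B :=
      Metric.diam_le_of_forall_dist_le (by linarith) hdd
    calc Metric.diam (V ∩ KK) ≤ 2*B := hdiam
      _ ≤ δ/2 := h2B
      _ < δ := by linarith

end Aux

/-- there is a closed, bounded, convex, symmetric subset `K` of the unit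
ball of `c` (the convergent sequences) with diameter `2`, all of whose slices have
diameter `2`, yet containing nonempty relatively weakly open subsets of arbitrarily
small diameter. -/


theorem exists_K_big_slices_small_weak_opens :
    ∃ K : Set cSp,
      K ⊆ Metric.closedBall 0 1 ∧
      (∀ x ∈ K, ∃ l : ℝ, Tendsto (x : ℕ+ → ℝ) atTop (𝓝 l)) ∧
      IsClosed K ∧ Convex ℝ K ∧ K = -K ∧ Metric.diam K = 2 ∧
      (∀ f : StrongDual ℝ cSp, ∀ lam : ℝ, 0 < lam → lam < sSup (f '' K) →
        Metric.diam {x ∈ K | sSup (f '' K) - lam < f x} = 2) ∧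
      ∀ δ : ℝ, 0 < δ →
        ∃ V : Set cSp, WOpen V ∧ (V ∩ K).Nonempty ∧ Metric.diam (V ∩ K) < δ := by
  refine ⟨Aux.KK, Aux.KsubBall, ?_, Aux.Kclosed, Aux.Kconvex, Aux.Ksymm, Aux.Kdiam, ?_, ?_⟩
  · intro x hx
    exact Aux.KsubC hx
  · intro f lam hlam _
    exact Aux.slice_diam f lam hlam
  · intro δ hδ
    exact Aux.weak_opens δ hδ
end
end

section
/- If each X_n has the slice diameter 2 property, then the ℓ₂-sum Z = (⊕_n X_n)_{ℓ₂} has the slice diameter 2 property. -/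
open Filter Topology
open scoped ENNReal

noncomputable section

section Aux

variable {X : ℕ → Type*} [∀ n, NormedAddCommGroup (X n)] [∀ n, NormedSpace ℝ (X n)]

lemma lp_single_add (n : ℕ) (a b : X n) :
    lp.single 2 n (a + b) = lp.single 2 n a + lp.single 2 n b := by
  ext j
  rcases eq_or_ne j n with rfl | h
  · simp [lp.single_apply_self]
  · simp [lp.single_apply_ne _ _ _ h]

lemma norm_lp_single (n : ℕ) (a : X n) : ‖lp.single (E := X) 2 n a‖ = ‖a‖ := by
  classical
  have := lp.norm_single (E := X) (p := 2) (by norm_num)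
    n a
  simpa using this

/-- The canonical inclusion of `X n` into the `ℓ²`-sum, as a continuous linear map. -/
def lpSingleCLM (n : ℕ) : X n →L[ℝ] lp X 2 :=
  LinearMap.mkContinuous
    { toFun := lp.single 2 n
      map_add' := lp_single_add n
      map_smul' := fun c a => lp.single_smul 2 n c a }
    1 (fun a => by rw [one_mul]; exact le_of_eq (norm_lp_single n a))

@[simp] lemma lpSingleCLM_apply (n : ℕ) (a : X n) :
    lpSingleCLM n a = lp.single (E := X) 2 n a := rfl

lemma exists_far_pair {A : Type*} [PseudoMetricSpace A] {S : Set A}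
    (hd : Metric.diam S = 2) {ε : ℝ} (hε : 0 < ε) (hε2 : ε ≤ 2) :
    ∃ u ∈ S, ∃ v ∈ S, 2 - ε < dist u v := by
  by_contra h
  push_neg at h
  have := Metric.diam_le_of_forall_dist_le (by linarith : (0:ℝ) ≤ 2 - ε)
    (fun x hx y hy => h x hx y hy)
  rw [hd] at this
  linarith

lemma two_toReal : ((2 : ℝ≥0∞)).toReal = (2 : ℝ) := by norm_num

lemma rpow_two_toReal (a : ℝ) (ha : 0 ≤ a) : a ^ ((2 : ℝ≥0∞)).toReal = a ^ 2 := by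
  rw [two_toReal, show (2:ℝ) = ((2:ℕ):ℝ) by norm_num, Real.rpow_natCast]

end Aux

set_option maxHeartbeats 1000000 in
/-- if each `X n` has the slice diameter 2 property, then so does the
`ℓ₂`-sum `(⊕_n X_n)_{ℓ₂}`. -/
theorem l2_sum_SD2P (X : ℕ → Type*) [∀ n, NormedAddCommGroup (X n)]
    [∀ n, NormedSpace ℝ (X n)] [∀ n, CompleteSpace (X n)]
    (hsd : ∀ n, ∀ f : StrongDual ℝ (X n), ‖f‖ = 1 → ∀ α : ℝ, 0 < α →
      Metric.diam {x ∈ Metric.closedBall (0 : X n) 1 | 1 - α < f x} = 2) :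
    ∀ f : StrongDual ℝ (lp X 2), ‖f‖ = 1 → ∀ α : ℝ, 0 < α →
      Metric.diam {x ∈ Metric.closedBall (0 : lp X 2) 1 | 1 - α < f x} = 2 := by
  classical
  intro f hf α hα
  set S := {x ∈ Metric.closedBall (0 : lp X 2) 1 | 1 - α < f x} with hSdef
  have hSsub : S ⊆ Metric.closedBall 0 1 := fun x hx => hx.1
  have hub : Metric.diam S ≤ 2 := by
    refine Metric.diam_le_of_forall_dist_le (by norm_num) (fun x hx y hy => ?_)
    have hx1 : ‖x‖ ≤ 1 := by simpa using mem_closedBall_zero_iff.mp (hSsub hx)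
    have hy1 : ‖y‖ ≤ 1 := by simpa using mem_closedBall_zero_iff.mp (hSsub hy)
    calc dist x y ≤ ‖x‖ + ‖y‖ := dist_le_norm_add_norm x y
    _ ≤ 2 := by linarith
  refine le_antisymm hub ?_
  have main : ∀ ε : ℝ, 0 < ε → ε ≤ 2 → 2 - ε ≤ Metric.diam S := by
    intro ε hε hε2
    set β := min α 1 / 4 with hβdef
    have hβ0 : 0 < β := by positivity
    have hβ1 : β ≤ 1 / 4 := by
      have : min α 1 ≤ 1 := min_le_right _ _
      rw [hβdef]; linarith
    have h2βα : 2 * β < α := by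
      rcases le_total α 1 with h | h
      · rw [hβdef, min_eq_left h]; linarith
      · rw [hβdef, min_eq_right h]; linarith
    set Fn : ∀ n, StrongDual ℝ (X n) := fun n => f.comp (lpSingleCLM n) with hFndef
    -- choose x with ‖x‖ ≤ 1 and f x > 1 - β
    obtain ⟨x₀, hx₀1, hx₀2⟩ := f.exists_lt_apply_of_lt_opNorm
      (r := 1 - β) (by rw [hf]; linarith)
    obtain ⟨x, hx1, hx2⟩ : ∃ x : lp X 2, ‖x‖ ≤ 1 ∧ 1 - β < f x := by
      rcases le_or_gt 0 (f x₀) with h | h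
      · exact ⟨x₀, hx₀1.le, by rwa [Real.norm_eq_abs, abs_of_nonneg h] at hx₀2⟩
      · refine ⟨-x₀, by simpa using hx₀1.le, ?_⟩
        rw [map_neg]
        rwa [Real.norm_eq_abs, abs_of_neg h] at hx₀2
    -- decompose f x
    have hsum : HasSum (fun n => Fn n (x n)) (f x) := by
      have h1 := lp.hasSum_single (E := X) (p := 2) (by simp) x
      exact h1.mapL f
    obtain ⟨N, hN⟩ : ∃ N : ℕ, 1 - β < ∑ n ∈ Finset.range N, Fn n (x n) :=
      ((hsum.tendsto_sum_nat).eventually (eventually_gt_nhds hx2)).exists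
    set s := ∑ n ∈ Finset.range N, ‖Fn n‖ ^ 2 with hsdef
    have hs0 : 0 ≤ s := Finset.sum_nonneg fun n _ => sq_nonneg _
    have hs_ge : (1 - β) ^ 2 ≤ s := by
      have h1 : ∑ n ∈ Finset.range N, Fn n (x n)
          ≤ ∑ n ∈ Finset.range N, ‖Fn n‖ * ‖x n‖ := by
        refine Finset.sum_le_sum fun n _ => ?_
        calc Fn n (x n) ≤ ‖Fn n (x n)‖ := by
              rw [Real.norm_eq_abs]; exact le_abs_self _
        _ ≤ ‖Fn n‖ * ‖x n‖ := (Fn n).le_opNorm (x n)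
      have h2 := Finset.sum_mul_sq_le_sq_mul_sq (Finset.range N)
        (fun n => ‖Fn n‖) (fun n => ‖x n‖)
      have h3 : ∑ n ∈ Finset.range N, ‖x n‖ ^ 2 ≤ 1 := by
        have h4 := lp.sum_rpow_le_norm_rpow (E := X) (p := 2) (by norm_num)
          x (Finset.range N)
        have h5 : ∑ n ∈ Finset.range N, ‖x n‖ ^ ((2:ℝ≥0∞)).toReal
            = ∑ n ∈ Finset.range N, ‖x n‖ ^ 2 :=
          Finset.sum_congr rfl fun n _ => rpow_two_toReal _ (norm_nonneg _)
        rw [h5, rpow_two_toReal _ (norm_nonneg _)] at h4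
        have h6 : ‖x‖ ^ 2 ≤ 1 := by nlinarith [norm_nonneg x]
        linarith
      have ht0 : 0 ≤ ∑ n ∈ Finset.range N, ‖x n‖ ^ 2 :=
        Finset.sum_nonneg fun n _ => sq_nonneg _
      have hB : 1 - β ≤ ∑ n ∈ Finset.range N, ‖Fn n‖ * ‖x n‖ := le_trans hN.le h1
      have h8 : (1 - β) ^ 2 ≤ (∑ n ∈ Finset.range N, ‖Fn n‖ * ‖x n‖) ^ 2 :=
        pow_le_pow_left₀ (by linarith) hB 2
      have h9 : (∑ i ∈ Finset.range N, ‖Fn i‖ ^ 2) * (∑ i ∈ Finset.range N, ‖x i‖ ^ 2)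
          ≤ (∑ i ∈ Finset.range N, ‖Fn i‖ ^ 2) * 1 := by
        exact mul_le_mul_of_nonneg_left h3 hs0
      calc (1 - β) ^ 2 ≤ (∑ n ∈ Finset.range N, ‖Fn n‖ * ‖x n‖) ^ 2 := h8
      _ ≤ (∑ i ∈ Finset.range N, ‖Fn i‖ ^ 2) * (∑ i ∈ Finset.range N, ‖x i‖ ^ 2) := h2
      _ ≤ s := by rw [mul_one] at h9; exact h9
    set r := Real.sqrt s with hrdef
    have hr_ge : 1 - β ≤ r := by
      have := Real.sqrt_le_sqrt hs_ge
      rwa [Real.sqrt_sq (by linarith : (0:ℝ) ≤ 1 - β)] at this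
    have hr_pos : 0 < r := by linarith
    have hr2 : r ^ 2 = s := Real.sq_sqrt hs0
    -- per-coordinate pairs of far points in slices
    have key : ∀ n, ∃ u v : X n, ‖u‖ ≤ 1 ∧ ‖v‖ ≤ 1 ∧
        (1 - β) * ‖Fn n‖ ≤ Fn n u ∧ (1 - β) * ‖Fn n‖ ≤ Fn n v ∧
        (2 - ε) * ‖Fn n‖ ≤ ‖u - v‖ * ‖Fn n‖ := by
      intro n
      rcases eq_or_ne (Fn n) 0 with h0 | h0
      · exact ⟨0, 0, by simp, by simp, by simp [h0], by simp [h0], by simp [h0]⟩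
      · have hn0 : (0:ℝ) < ‖Fn n‖ := norm_pos_iff.mpr h0
        set g : StrongDual ℝ (X n) := ‖Fn n‖⁻¹ • Fn n with hgdef
        have hg1 : ‖g‖ = 1 := by
          rw [hgdef, norm_smul, norm_inv, norm_norm]
          field_simp
        have hdiam := hsd n g hg1 β hβ0
        obtain ⟨u, hu, v, hv, huv⟩ := exists_far_pair hdiam hε hε2
        have hgu : g u = ‖Fn n‖⁻¹ * Fn n u := by
          rw [hgdef]; simp [smul_eq_mul]
        have hgv : g v = ‖Fn n‖⁻¹ * Fn n v := by
          rw [hgdef]; simp [smul_eq_mul]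
        have hu2 : 1 - β < ‖Fn n‖⁻¹ * Fn n u := by rw [← hgu]; exact hu.2
        have hv2 : 1 - β < ‖Fn n‖⁻¹ * Fn n v := by rw [← hgv]; exact hv.2
        refine ⟨u, v, by simpa using mem_closedBall_zero_iff.mp hu.1,
          by simpa using mem_closedBall_zero_iff.mp hv.1, ?_, ?_, ?_⟩
        · have := mul_le_mul_of_nonneg_right hu2.le hn0.le
          calc (1 - β) * ‖Fn n‖ ≤ ‖Fn n‖⁻¹ * Fn n u * ‖Fn n‖ := this
          _ = Fn n u := by field_simp
        · have := mul_le_mul_of_nonneg_right hv2.le hn0.le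
          calc (1 - β) * ‖Fn n‖ ≤ ‖Fn n‖⁻¹ * Fn n v * ‖Fn n‖ := this
          _ = Fn n v := by field_simp
        · have h1 : 2 - ε ≤ ‖u - v‖ := by
            rw [← dist_eq_norm]; linarith [huv]
          exact mul_le_mul_of_nonneg_right h1 (norm_nonneg _)
    choose u v hu1 hv1 hu2 hv2 huv using key
    set G : ∀ n, X n := fun n => (‖Fn n‖ / r) • u n with hGdef
    set H : ∀ n, X n := fun n => (‖Fn n‖ / r) • v n with hHdef
    set z := ∑ n ∈ Finset.range N, lp.single (E := X) 2 n (G n) with hzdef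
    set w := ∑ n ∈ Finset.range N, lp.single (E := X) 2 n (H n) with hwdef
    have norm_sq : ∀ K : ∀ n, X n,
        ‖∑ n ∈ Finset.range N, lp.single (E := X) 2 n (K n)‖ ^ 2
          = ∑ n ∈ Finset.range N, ‖K n‖ ^ 2 := by
      intro K
      have h1 := lp.norm_sum_single (E := X) (p := 2) (by norm_num) K (Finset.range N)
      calc ‖∑ n ∈ Finset.range N, lp.single (E := X) 2 n (K n)‖ ^ 2
          = ‖∑ n ∈ Finset.range N, lp.single (E := X) 2 n (K n)‖ ^ ((2:ℝ≥0∞)).toReal :=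
            (rpow_two_toReal _ (norm_nonneg _)).symm
      _ = ∑ n ∈ Finset.range N, ‖K n‖ ^ ((2:ℝ≥0∞)).toReal := h1
      _ = ∑ n ∈ Finset.range N, ‖K n‖ ^ 2 :=
            Finset.sum_congr rfl fun n _ => rpow_two_toReal _ (norm_nonneg _)
    -- norm bounds: z, w in the unit ball
    have hball : ∀ K : ∀ n, X n, (∀ n, ‖K n‖ ≤ 1) →
        ‖∑ n ∈ Finset.range N, lp.single (E := X) 2 n ((‖Fn n‖ / r) • K n)‖ ≤ 1 := by
      intro K hK
      have h1 := norm_sq (fun n => (‖Fn n‖ / r) • K n)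
      have h2 : ∑ n ∈ Finset.range N, ‖(‖Fn n‖ / r) • K n‖ ^ 2 ≤ 1 := by
        have h3 : ∀ n ∈ Finset.range N,
            ‖(‖Fn n‖ / r) • K n‖ ^ 2 ≤ ‖Fn n‖ ^ 2 / r ^ 2 := by
          intro n _
          rw [norm_smul, Real.norm_eq_abs, abs_of_nonneg (by positivity : (0:ℝ) ≤ ‖Fn n‖ / r),
            mul_pow, div_pow]
          have hKn : ‖K n‖ ^ 2 ≤ 1 := by nlinarith [norm_nonneg (K n), hK n]
          nlinarith [sq_nonneg (‖Fn n‖ / r), div_nonneg (sq_nonneg ‖Fn n‖) (sq_nonneg r)]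
        calc ∑ n ∈ Finset.range N, ‖(‖Fn n‖ / r) • K n‖ ^ 2
            ≤ ∑ n ∈ Finset.range N, ‖Fn n‖ ^ 2 / r ^ 2 := Finset.sum_le_sum h3
        _ = s / r ^ 2 := by rw [← Finset.sum_div]
        _ = 1 := by
          rw [hr2]
          exact div_self (ne_of_gt (lt_of_lt_of_le (pow_pos (by linarith) 2) hs_ge))
      nlinarith [norm_nonneg (∑ n ∈ Finset.range N, lp.single (E := X) 2 n ((‖Fn n‖ / r) • K n))]
    have hz_norm : ‖z‖ ≤ 1 := hball u hu1
    have hw_norm : ‖w‖ ≤ 1 := hball v hv1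
    -- slice membership: functional values
    have happ : ∀ K : ∀ n, X n,
        f (∑ n ∈ Finset.range N, lp.single (E := X) 2 n (K n))
          = ∑ n ∈ Finset.range N, Fn n (K n) := by
      intro K
      rw [map_sum]
      exact Finset.sum_congr rfl fun n _ => rfl
    have hfbig : ∀ K : ∀ n, X n, (∀ n, (1 - β) * ‖Fn n‖ ≤ Fn n (K n)) →
        1 - α < f (∑ n ∈ Finset.range N, lp.single (E := X) 2 n ((‖Fn n‖ / r) • K n)) := by
      intro K hK
      rw [happ]
      have h2 : ∀ n ∈ Finset.range N,
          (1 - β) * ‖Fn n‖ ^ 2 / r ≤ Fn n ((‖Fn n‖ / r) • K n) := by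
        intro n _
        rw [map_smul, smul_eq_mul]
        have hrn : (0:ℝ) ≤ ‖Fn n‖ / r := by positivity
        calc (1 - β) * ‖Fn n‖ ^ 2 / r = (‖Fn n‖ / r) * ((1 - β) * ‖Fn n‖) := by ring
        _ ≤ (‖Fn n‖ / r) * Fn n (K n) := mul_le_mul_of_nonneg_left (hK n) hrn
      have h3 : ∑ n ∈ Finset.range N, (1 - β) * ‖Fn n‖ ^ 2 / r
          ≤ ∑ n ∈ Finset.range N, Fn n ((‖Fn n‖ / r) • K n) := Finset.sum_le_sum h2
      have h4 : ∑ n ∈ Finset.range N, (1 - β) * ‖Fn n‖ ^ 2 / r = (1 - β) * r := by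
        rw [← Finset.sum_div, ← Finset.mul_sum, ← hsdef, ← hr2]
        field_simp
      have h5 : (1 - β) * (1 - β) ≤ (1 - β) * r :=
        mul_le_mul_of_nonneg_left hr_ge (by linarith)
      rw [h4] at h3
      nlinarith [h3, h5, h2βα, hβ0]
    have hfz : 1 - α < f z := hfbig u hu2
    have hfw : 1 - α < f w := hfbig v hv2
    -- distance between z and w
    have hzw : z - w = ∑ n ∈ Finset.range N, lp.single (E := X) 2 n (G n - H n) := by
      rw [hzdef, hwdef, ← Finset.sum_sub_distrib]
      refine Finset.sum_congr rfl fun n _ => ?_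
      exact (map_sub (lpSingleCLM n) (G n) (H n)).symm
    have hdistzw : 2 - ε ≤ dist z w := by
      have h1 : ‖z - w‖ ^ 2 = ∑ n ∈ Finset.range N, ‖G n - H n‖ ^ 2 := by
        rw [hzw]; exact norm_sq _
      have h2 : ∀ n ∈ Finset.range N,
          (2 - ε) ^ 2 * ‖Fn n‖ ^ 2 / r ^ 2 ≤ ‖G n - H n‖ ^ 2 := by
        intro n _
        have hGH : G n - H n = (‖Fn n‖ / r) • (u n - v n) := by
          rw [hGdef, hHdef]; simp [smul_sub]
        rw [hGH, norm_smul, Real.norm_eq_abs,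
          abs_of_nonneg (by positivity : (0:ℝ) ≤ ‖Fn n‖ / r), mul_pow, div_pow]
        have h2e : (0:ℝ) ≤ 2 - ε := by linarith
        have hsq : ((2 - ε) * ‖Fn n‖) ^ 2 ≤ (‖u n - v n‖ * ‖Fn n‖) ^ 2 := by
          have hle := huv n
          have h0l : (0:ℝ) ≤ (2 - ε) * ‖Fn n‖ := mul_nonneg h2e (norm_nonneg _)
          exact pow_le_pow_left₀ h0l hle 2
        have hrpos2 : (0:ℝ) < r ^ 2 := by positivity
        calc (2 - ε) ^ 2 * ‖Fn n‖ ^ 2 / r ^ 2 = ((2 - ε) * ‖Fn n‖) ^ 2 / r ^ 2 := by ring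
        _ ≤ (‖u n - v n‖ * ‖Fn n‖) ^ 2 / r ^ 2 := by gcongr
        _ = ‖Fn n‖ ^ 2 / r ^ 2 * ‖u n - v n‖ ^ 2 := by ring
      have h3 : (2 - ε) ^ 2 ≤ ‖z - w‖ ^ 2 := by
        rw [h1]
        calc (2 - ε) ^ 2 = ∑ n ∈ Finset.range N, (2 - ε) ^ 2 * ‖Fn n‖ ^ 2 / r ^ 2 := by
              rw [← Finset.sum_div, ← Finset.mul_sum, ← hsdef, ← hr2]
              field_simp
        _ ≤ ∑ n ∈ Finset.range N, ‖G n - H n‖ ^ 2 := Finset.sum_le_sum h2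
      rw [dist_eq_norm]
      nlinarith [norm_nonneg (z - w), h3]
    have hzS : z ∈ S := ⟨mem_closedBall_zero_iff.mpr hz_norm, hfz⟩
    have hwS : w ∈ S := ⟨mem_closedBall_zero_iff.mpr hw_norm, hfw⟩
    calc 2 - ε ≤ dist z w := hdistzw
    _ ≤ Metric.diam S :=
      Metric.dist_le_diam_of_mem (Metric.isBounded_closedBall.subset hSsub) hzS hwS
  by_contra hlt
  push_neg at hlt
  have hd0 : 0 ≤ Metric.diam S := Metric.diam_nonneg
  have := main ((2 - Metric.diam S) / 2) (by linarith) (by linarith)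
  linarith
end
end
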